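/- For all real numbers τ₁, τ₂ with 1 ≤ τ₁ < τ₂ < 1.5, the diagonal real 2×2 matrix T = diag(τ₁/τ₂, √((2τ₁ − τ₁²)/(2τ₂ − τ₂²))) satisfies ‖T‖ > 1 in the Euclidean operator norm. -/

import Mathlib

/-- For `1 ≤ τ₁ < τ₂ < 1.5`, the diagonal matrix
`T = diag(τ₁/τ₂, √((2τ₁ − τ₁²)/(2τ₂ − τ₂²)))` has Euclidean operator norm greater than `1`;
hence the honeycomb deformation path is not auxetic on `(1, 1.5)`. -/
theorem stmt_13 (τ₁ τ₂ : ℝ) (h11 : 1 ≤ τ₁) (h12 : τ₁ < τ₂) (h215 : τ₂ < 1.5) :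
    1 < ‖Matrix.toEuclideanCLM (𝕜 := ℝ)
      (Matrix.diagonal ![τ₁ / τ₂, Real.sqrt ((2*τ₁ - τ₁^2) / (2*τ₂ - τ₂^2))])‖ := by
  set s : ℝ := Real.sqrt ((2*τ₁ - τ₁^2) / (2*τ₂ - τ₂^2)) with hs
  have hden : 0 < 2*τ₂ - τ₂^2 := by nlinarith
  have hnum : 2*τ₂ - τ₂^2 < 2*τ₁ - τ₁^2 := by nlinarith
  have hs1 : 1 < s := by
    rw [hs]
    rw [show (1:ℝ) = Real.sqrt 1 by simp]
    apply Real.sqrt_lt_sqrt (by norm_num)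
    rw [lt_div_iff₀ hden]
    linarith
  set T := Matrix.toEuclideanCLM (𝕜 := ℝ)
      (Matrix.diagonal ![τ₁ / τ₂, s])
  set e : EuclideanSpace ℝ (Fin 2) := (WithLp.equiv 2 (Fin 2 → ℝ)).symm ![0, 1] with he
  have hTe : T e = (WithLp.equiv 2 (Fin 2 → ℝ)).symm ![0, s] := by
    rw [he, WithLp.equiv_symm_apply, Matrix.toEuclideanCLM_toLp]
    congr 1
    funext i
    fin_cases i <;> simp [Matrix.mulVec_diagonal]
  have hnorme : ‖e‖ = 1 := by
    rw [he, EuclideanSpace.norm_eq]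
    simp [WithLp.equiv_symm_apply, PiLp.toLp_apply, Fin.sum_univ_succ]
  have hnormTe : ‖T e‖ = s := by
    rw [hTe, EuclideanSpace.norm_eq]
    simp only [WithLp.equiv_symm_apply, PiLp.toLp_apply, Fin.sum_univ_succ, Fin.sum_univ_zero]
    simp [Real.sqrt_sq_eq_abs, abs_of_pos (lt_trans one_pos hs1)]
  by_contra h
  push_neg at h
  have := T.le_opNorm e
  rw [hnormTe, hnorme, mul_one] at this
  linarith
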